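/- Fix ε > 0 and θ ∈ (0, π/2). The Cauchy problem U'' = (1/ε)(1+(U')²)^{5/4} √(√(1+(U')²) − 1) on (−∞, 0] with U(0) = 0 and U'(0) = tan θ has a unique solution U_{θ,ε} : (−∞,0] → ℝ satisfying U_{θ,ε} < 0, U'_{θ,ε} > 0, U''_{θ,ε} > 0 on (−∞,0); moreover U_{θ,ε}(x) = ε·U_{θ,1}(x/ε) for all x ≤ 0, and U'_{θ,1}(x) → 0 as x → −∞. -/

import Mathlib

open Real Set Filter Topology intervalIntegral

/-- `U` solves the profile Cauchy problem
`U'' = (1/ε)(1+(U')²)^{5/4}√(√(1+(U')²)−1)` on `(−∞,0]`, `U(0)=0`, `U'(0)=tan θ`. -/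
def IsProfileSol (ε θ : ℝ) (U : ℝ → ℝ) : Prop :=
  (∀ x ≤ (0:ℝ), DifferentiableAt ℝ U x ∧ DifferentiableAt ℝ (deriv U) x) ∧
  U 0 = 0 ∧ deriv U 0 = Real.tan θ ∧
  ∀ x ≤ (0:ℝ), deriv (deriv U) x =
    (1/ε) * (1 + (deriv U x) ^ 2) ^ ((5:ℝ)/4) *
      Real.sqrt (Real.sqrt (1 + (deriv U x) ^ 2) - 1)
noncomputable def Fq : ℝ → ℝ := fun q => (1+q^2)^((5:ℝ)/4) * Real.sqrt (Real.sqrt (1+q^2) - 1)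
noncomputable def gq : ℝ → ℝ := fun q => (1+q^2)^((5:ℝ)/4) / Real.sqrt (Real.sqrt (1+q^2) + 1)

lemma one_add_sq_pos (q : ℝ) : (0:ℝ) < 1 + q^2 := by positivity
lemma sqrt_one_add_sq_ge_one (q : ℝ) : 1 ≤ Real.sqrt (1+q^2) :=
  Real.one_le_sqrt.mpr (by nlinarith [sq_nonneg q])

lemma Fq_eq (q : ℝ) : Fq q = |q| * gq q := by
  have h1 : (1:ℝ) ≤ Real.sqrt (1+q^2) := sqrt_one_add_sq_ge_one q
  have hpos : 0 < Real.sqrt (1+q^2) + 1 := by linarith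
  have key : Real.sqrt (1+q^2) - 1 = q^2 / (Real.sqrt (1+q^2) + 1) := by
    rw [eq_div_iff (ne_of_gt hpos)]
    have := Real.sq_sqrt (le_of_lt (one_add_sq_pos q))
    nlinarith [this]
  unfold Fq gq
  rw [key, Real.sqrt_div (sq_nonneg q), Real.sqrt_sq_eq_abs]
  ring

lemma sqrt_add_one_pos (q : ℝ) : 0 < Real.sqrt (1+q^2) + 1 := by
  linarith [sqrt_one_add_sq_ge_one q]

lemma gq_pos (q : ℝ) : 0 < gq q := by
  unfold gq
  have h1 := sqrt_one_add_sq_ge_one q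
  have : 0 < Real.sqrt (Real.sqrt (1+q^2) + 1) := Real.sqrt_pos.mpr (sqrt_add_one_pos q)
  positivity

lemma Fq_nonneg (q : ℝ) : 0 ≤ Fq q := by
  rw [Fq_eq]; exact mul_nonneg (abs_nonneg q) (gq_pos q).le

lemma Fq_pos {q : ℝ} (hq : 0 < q) : 0 < Fq q := by
  rw [Fq_eq]; exact mul_pos (abs_pos.mpr hq.ne') (gq_pos q)

lemma Fq_pos_eq {q : ℝ} (hq : 0 ≤ q) : Fq q = q * gq q := by
  rw [Fq_eq, abs_of_nonneg hq]

lemma gq_contDiff : ContDiff ℝ 1 gq := by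
  rw [contDiff_iff_contDiffAt]
  intro q
  have hb : ContDiff ℝ 1 (fun q : ℝ => 1 + q^2) := by
    exact contDiff_const.add (contDiff_id.pow 2)
  have hs : ContDiffAt ℝ 1 (fun q : ℝ => Real.sqrt (1+q^2)) q := by
    exact (Real.contDiffAt_sqrt (one_add_sq_pos q).ne').comp q hb.contDiffAt
  have hnum : ContDiffAt ℝ 1 (fun q : ℝ => (1+q^2)^((5:ℝ)/4)) q := by
    exact (Real.contDiffAt_rpow_const_of_ne (one_add_sq_pos q).ne').comp q hb.contDiffAt
  have hden : ContDiffAt ℝ 1 (fun q : ℝ => Real.sqrt (Real.sqrt (1+q^2) + 1)) q := by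
    exact (Real.contDiffAt_sqrt (sqrt_add_one_pos q).ne').comp q (hs.add contDiffAt_const)
  exact hnum.div hden (Real.sqrt_pos.mpr (sqrt_add_one_pos q)).ne'

lemma gq_continuous : Continuous gq := gq_contDiff.continuous

lemma Fq_continuous : Continuous Fq := by
  have : Continuous fun q : ℝ => |q| * gq q := (continuous_abs).mul gq_continuous
  exact this.congr fun q => (Fq_eq q).symm

lemma Fq_def (q : ℝ) : Fq q = (1+q^2)^((5:ℝ)/4) * Real.sqrt (Real.sqrt (1+q^2) - 1) := rfl

lemma Fq_lipschitz (M c : ℝ) : ∃ K : NNReal, LipschitzOnWith K (fun y => c * Fq y) (Icc (-M) M) := by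
  have hconv : Convex ℝ (Icc (-M:ℝ) M) := convex_Icc _ _
  have hcpt : IsCompact (Icc (-M:ℝ) M) := isCompact_Icc
  obtain ⟨C, hC⟩ := hcpt.exists_bound_of_continuousOn
    ((gq_contDiff.continuous_deriv le_rfl).continuousOn (s := Icc (-M) M))
  obtain ⟨B, hB⟩ := hcpt.exists_bound_of_continuousOn
    (gq_contDiff.continuous.continuousOn (s := Icc (-M) M))
  set C' := max C 0 with hC'def
  set B' := max B 0 with hB'def
  set M' := max M 0 with hM'def
  have hC0 : 0 ≤ C' := le_max_right _ _
  have hB0 : 0 ≤ B' := le_max_right _ _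
  have hM0 : 0 ≤ M' := le_max_right _ _
  have Lg : LipschitzOnWith C'.toNNReal gq (Icc (-M) M) := by
    apply hconv.lipschitzOnWith_of_nnnorm_deriv_le
      (fun x hx => (gq_contDiff.differentiable one_ne_zero).differentiableAt)
    intro x hx
    rw [← NNReal.coe_le_coe, coe_nnnorm, Real.coe_toNNReal _ hC0]
    exact le_trans (hC x hx) (le_max_left _ _)
  refine ⟨(|c| * (B' + M' * C')).toNNReal, ?_⟩
  rw [lipschitzOnWith_iff_dist_le_mul]
  intro x hx y hy
  rw [Real.dist_eq, Real.dist_eq, Real.coe_toNNReal _ (by positivity)]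
  have hgL : |gq x - gq y| ≤ C' * |x - y| := by
    have := Lg.dist_le_mul x hx y hy
    rwa [Real.dist_eq, Real.dist_eq, Real.coe_toNNReal _ hC0] at this
  have hgB : |gq x| ≤ B' := le_trans (by simpa using hB x hx) (le_max_left _ _)
  have hyM : |y| ≤ M' := by
    rw [abs_le]; exact ⟨le_trans (neg_le_neg (le_max_left M 0)) hy.1, le_trans hy.2 (le_max_left _ _)⟩
  have key : |Fq x - Fq y| ≤ (B' + M' * C') * |x - y| := by
    have hdecomp : Fq x - Fq y = (|x| - |y|) * gq x + |y| * (gq x - gq y) := by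
      rw [Fq_eq, Fq_eq]; ring
    calc |Fq x - Fq y| ≤ |(|x| - |y|) * gq x| + |(|y|) * (gq x - gq y)| := by
          rw [hdecomp]; exact abs_add_le _ _
      _ = |(|x| - |y|)| * |gq x| + |y| * |gq x - gq y| := by
          rw [abs_mul, abs_mul, abs_abs]
      _ ≤ |x - y| * B' + M' * (C' * |x - y|) := by
          apply add_le_add
          · exact mul_le_mul (abs_abs_sub_abs_le_abs_sub x y) hgB (abs_nonneg _)
              (abs_nonneg _)
          · exact mul_le_mul hyM hgL (abs_nonneg _) hM0
      _ = (B' + M' * C') * |x - y| := by ring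
  calc |c * Fq x - c * Fq y| = |c| * |Fq x - Fq y| := by rw [← abs_mul]; ring_nf
    _ ≤ |c| * ((B' + M' * C') * |x - y|) := by
        exact mul_le_mul_of_nonneg_left key (abs_nonneg c)
    _ = |c| * (B' + M' * C') * |x - y| := by ring

lemma ode_unique (c : ℝ) (w₁ w₂ : ℝ → ℝ)
    (h₁ : ∀ t ≤ (0:ℝ), HasDerivAt w₁ (c * Fq (w₁ t)) t)
    (h₂ : ∀ t ≤ (0:ℝ), HasDerivAt w₂ (c * Fq (w₂ t)) t)
    (h0 : w₁ 0 = w₂ 0) : ∀ x ≤ (0:ℝ), w₁ x = w₂ x := by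
  intro x hx
  rcases eq_or_lt_of_le hx with rfl | hx'
  · exact h0
  -- work on Icc x 0
  have hc1 : ContinuousOn w₁ (Icc x 0) := fun t ht =>
    ((h₁ t ht.2).continuousAt).continuousWithinAt
  have hc2 : ContinuousOn w₂ (Icc x 0) := fun t ht =>
    ((h₂ t ht.2).continuousAt).continuousWithinAt
  obtain ⟨M₁, hM₁⟩ := isCompact_Icc.exists_bound_of_continuousOn hc1
  obtain ⟨M₂, hM₂⟩ := isCompact_Icc.exists_bound_of_continuousOn hc2
  set M := max M₁ M₂ with hMdef
  obtain ⟨K, hK⟩ := Fq_lipschitz M c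
  have mem₁ : ∀ t ∈ Ioc x 0, w₁ t ∈ Icc (-M) M := by
    intro t ht
    have := hM₁ t ⟨ht.1.le, ht.2⟩
    rw [Real.norm_eq_abs, abs_le] at this
    exact ⟨le_trans (neg_le_neg (le_max_left _ _)) this.1, this.2.trans (le_max_left _ _)⟩
  have mem₂ : ∀ t ∈ Ioc x 0, w₂ t ∈ Icc (-M) M := by
    intro t ht
    have := hM₂ t ⟨ht.1.le, ht.2⟩
    rw [Real.norm_eq_abs, abs_le] at this
    exact ⟨le_trans (neg_le_neg (le_max_right _ _)) this.1, this.2.trans (le_max_right _ _)⟩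
  have := ODE_solution_unique_of_mem_Icc_left (v := fun _ y => c * Fq y)
    (s := fun _ => Icc (-M) M) (K := K) (fun _ _ => hK)
    hc1 (fun t ht => (h₁ t ht.2).hasDerivWithinAt) mem₁
    hc2 (fun t ht => (h₂ t ht.2).hasDerivWithinAt) mem₂ h0
  exact this ⟨le_refl x, hx⟩

lemma exists_p (t₀ : ℝ) (ht₀ : 0 < t₀) :
    ∃ (p : ℝ → ℝ) (L : ℝ), 0 < L ∧ p 0 = t₀ ∧
      (∀ x < L, HasDerivAt p (Fq (p x)) x) ∧
      (∀ x < L, 0 < p x) ∧ (∀ x < 0, p x < t₀) ∧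
      Tendsto p atBot (𝓝 0) := by
  set T := t₀ + 1 with hTdef
  have hT : 0 < T := by linarith
  have ht₀T : t₀ < T := by linarith
  set Finv : ℝ → ℝ := fun t => (Fq t)⁻¹ with hFinvdef
  have hFinvpos : ∀ t ∈ Ioi (0:ℝ), 0 < Finv t := fun t ht => inv_pos.mpr (Fq_pos ht)
  have hFinvcont : ContinuousOn Finv (Ioi 0) :=
    Fq_continuous.continuousOn.inv₀ fun t ht => (Fq_pos ht).ne'
  have hsub : ∀ a b : ℝ, 0 < a → 0 < b → uIcc a b ⊆ Ioi 0 := by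
    intro a b ha hb t ht
    exact lt_of_lt_of_le (lt_min ha hb) ht.1
  have hInt : ∀ a b : ℝ, 0 < a → 0 < b → IntervalIntegrable Finv MeasureTheory.volume a b :=
    fun a b ha hb => (hFinvcont.mono (hsub a b ha hb)).intervalIntegrable
  set G : ℝ → ℝ := fun q => ∫ t in t₀..q, Finv t with hGdef
  have hGderiv : ∀ q ∈ Ioi (0:ℝ), HasDerivAt G (Finv q) q := by
    intro q hq
    exact integral_hasDerivAt_right (hInt t₀ q ht₀ hq)
      (hFinvcont.stronglyMeasurableAtFilter isOpen_Ioi q hq)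
      (hFinvcont.continuousAt (isOpen_Ioi.mem_nhds hq))
  have hGcont : ContinuousOn G (Ioi 0) :=
    fun q hq => ((hGderiv q hq).continuousAt).continuousWithinAt
  have hGmono : StrictMonoOn G (Ioi 0) := by
    apply strictMonoOn_of_deriv_pos (convex_Ioi 0) hGcont
    intro q hq
    rw [interior_Ioi] at hq
    rw [(hGderiv q hq).deriv]
    exact hFinvpos q hq
  have hG0 : G t₀ = 0 := integral_same
  -- lower bound on Finv near 0 and divergence of G
  obtain ⟨B, hB⟩ := (isCompact_Icc (a := (0:ℝ)) (b := t₀)).exists_bound_of_continuousOn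
    gq_continuous.continuousOn
  have hBpos : 0 < B := lt_of_lt_of_le (gq_pos t₀) (by
    simpa [abs_of_pos (gq_pos t₀)] using hB t₀ (by constructor <;> linarith))
  have hGle : ∀ q ∈ Ioo (0:ℝ) t₀, G q ≤ B⁻¹ * (Real.log q - Real.log t₀) := by
    intro q hq
    have hq0 := hq.1
    have hle : ∀ t ∈ Icc q t₀, (B * t)⁻¹ ≤ Finv t := by
      intro t ht
      have ht0 : 0 < t := lt_of_lt_of_le hq0 ht.1
      show (B*t)⁻¹ ≤ (Fq t)⁻¹
      apply inv_anti₀ (by rw [Fq_pos_eq ht0.le]; exact mul_pos ht0 (gq_pos t))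
      rw [Fq_pos_eq ht0.le]
      have : gq t ≤ B := le_trans (le_abs_self _) (hB t ⟨ht0.le, ht.2⟩)
      calc t * gq t ≤ t * B := by nlinarith
        _ = B * t := mul_comm _ _
    have hint1 : IntervalIntegrable (fun t => (B*t)⁻¹) MeasureTheory.volume q t₀ := by
      apply ContinuousOn.intervalIntegrable
      apply ContinuousOn.inv₀
      · exact (continuous_const.mul continuous_id).continuousOn
      · intro t ht
        have : 0 < t := lt_of_lt_of_le (lt_min hq0 ht₀) ht.1
        positivity
    have hmono := integral_mono_on hq.2.le hint1 (hInt q t₀ hq0 ht₀) hle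
    have heval : ∫ t in q..t₀, (B*t)⁻¹ = B⁻¹ * (Real.log t₀ - Real.log q) := by
      have : ∀ t : ℝ, (B*t)⁻¹ = B⁻¹ * (1/t) := by
        intro t; rw [mul_inv]; ring
      simp_rw [this]
      rw [intervalIntegral.integral_const_mul, integral_one_div ?hne]
      · rw [Real.log_div (by positivity) (by positivity)]
      · intro hmem
        exact absurd (lt_of_lt_of_le (lt_min hq0 ht₀) hmem.1) (lt_irrefl 0)
    have hGq : G q = -(∫ t in q..t₀, Finv t) := by
      rw [hGdef]
      simp [intervalIntegral.integral_symm q t₀]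
    rw [hGq]
    rw [heval] at hmono
    linarith
  have hGtend : Tendsto G (𝓝[>] (0:ℝ)) atBot := by
    apply tendsto_atBot_mono' _ _ (tendsto_atBot_add_const_right _ (-(B⁻¹ * Real.log t₀))
      (tendsto_log_nhdsGT_zero.const_mul_atBot (inv_pos.mpr hBpos)))
    filter_upwards [Ioo_mem_nhdsGT_of_mem (by constructor <;> [rfl; exact ht₀] : (0:ℝ) ∈ Ico 0 t₀)] with q hq
    have := hGle q hq
    linarith [this]
  set L := G T with hLdef
  have hTmem : T ∈ Ioi (0:ℝ) := hT
  have ht₀mem : t₀ ∈ Ioi (0:ℝ) := ht₀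
  have hL : 0 < L := by
    have := hGmono ht₀mem hTmem ht₀T
    rw [hG0] at this; exact this
  -- surjectivity below L
  have hsurj : ∀ x < L, ∃ q, (0 < q ∧ q < T) ∧ G q = x := by
    intro x hx
    have hev : ∀ᶠ q in 𝓝[>] (0:ℝ), G q < x := hGtend.eventually (eventually_lt_atBot x)
    have hev2 : Ioo (0:ℝ) t₀ ∈ 𝓝[>] (0:ℝ) :=
      Ioo_mem_nhdsGT_of_mem (by constructor <;> [rfl; exact ht₀])
    obtain ⟨q₀, hq₀1, hq₀2⟩ := (hev.and (eventually_of_mem hev2 (fun _ h => h))).exists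
    have hq₀T : q₀ ≤ T := by linarith [hq₀2.2]
    have hcont : ContinuousOn G (Icc q₀ T) :=
      hGcont.mono (fun t ht => lt_of_lt_of_le hq₀2.1 ht.1)
    have hx_mem : x ∈ Icc (G q₀) (G T) := ⟨hq₀1.le, hx.le⟩
    obtain ⟨q, hqmem, hGq⟩ := intermediate_value_Icc hq₀T hcont hx_mem
    refine ⟨q, ⟨lt_of_lt_of_le hq₀2.1 hqmem.1, ?_⟩, hGq⟩
    rcases eq_or_lt_of_le hqmem.2 with h | h
    · exfalso; rw [h] at hGq; rw [← hLdef] at hGq; rw [hGq] at hx; exact lt_irrefl x hx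
    · exact h
  classical
  set p : ℝ → ℝ := fun x => if hx : x < L then (hsurj x hx).choose else T with hpdef
  have hpspec : ∀ x (hx : x < L), (0 < p x ∧ p x < T) ∧ G (p x) = x := by
    intro x hx
    rw [hpdef]
    simp only [dif_pos hx]
    exact (hsurj x hx).choose_spec
  have hppos : ∀ x < L, 0 < p x := fun x hx => ((hpspec x hx).1).1
  have hpmem : ∀ x < L, p x ∈ Ioi (0:ℝ) := fun x hx => hppos x hx
  have hGp : ∀ x < L, G (p x) = x := fun x hx => (hpspec x hx).2
  have hp0 : p 0 = t₀ := by
    have h0L : (0:ℝ) < L := hL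
    exact hGmono.injOn (hpmem 0 h0L) ht₀mem (by rw [hGp 0 h0L, hG0])
  have hplt : ∀ x < L, ∀ r ∈ Ioi (0:ℝ), (p x < r ↔ x < G r) := by
    intro x hx r hr
    rw [← hGp x hx, hGmono.lt_iff_lt (hpmem x hx) hr, hGp x hx]
  have hpgt : ∀ x < L, ∀ r ∈ Ioi (0:ℝ), (r < p x ↔ G r < x) := by
    intro x hx r hr
    rw [← hGp x hx, hGmono.lt_iff_lt hr (hpmem x hx), hGp x hx]
  -- continuity of p
  have hpcont : ∀ x < L, ContinuousAt p x := by
    intro x hx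
    have hq₁ := hppos x hx
    rw [ContinuousAt]
    apply tendsto_order.2
    constructor
    · intro a ha
      set a' := max a (p x / 2) with ha'def
      have ha'0 : 0 < a' := lt_of_lt_of_le (by linarith) (le_max_right _ _)
      have ha'lt : a' < p x := max_lt ha (by linarith)
      have hGa' : G a' < x := (hpgt x hx a' ha'0).mp ha'lt
      have hopen : Ioo (G a') L ∈ 𝓝 x := Ioo_mem_nhds hGa' hx
      filter_upwards [hopen] with y hy
      exact lt_of_le_of_lt (le_max_left a (p x / 2)) ((hpgt y hy.2 a' ha'0).mpr hy.1)
    · intro b hb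
      set b' := min b T with hb'def
      have hb'0 : 0 < b' := lt_min (lt_trans hq₁ hb) hT
      have hb'gt : p x < b' := lt_min hb ((hpspec x hx).1).2
      have hGb' : x < G b' := (hplt x hx b' hb'0).mp hb'gt
      have hGb'L : G b' ≤ L := by
        rcases eq_or_lt_of_le (min_le_right b T : b' ≤ T) with h | h
        · show G (b ⊓ T) ≤ L; rw [h]
        · exact (hGmono hb'0 hTmem h).le
      have hopen : Iio (G b') ∈ 𝓝 x := Iio_mem_nhds hGb'
      filter_upwards [hopen] with y hy
      have hyL : y < L := lt_of_lt_of_le hy hGb'L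
      exact lt_of_lt_of_le ((hplt y hyL b' hb'0).mpr hy) (min_le_left b T)
  -- derivative of p
  have hpderiv : ∀ x < L, HasDerivAt p (Fq (p x)) x := by
    intro x hx
    have h1 : HasDerivAt G (Finv (p x)) (p x) := hGderiv (p x) (hpmem x hx)
    have h2 : Finv (p x) ≠ 0 := (hFinvpos (p x) (hpmem x hx)).ne'
    have h3 : ∀ᶠ y in 𝓝 x, G (p y) = y := by
      filter_upwards [Iio_mem_nhds hx] with y hy
      exact hGp y hy
    have := HasDerivAt.of_local_left_inverse (hpcont x hx) h1 h2 h3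
    rwa [hFinvdef, inv_inv] at this
  -- tendsto at -infinity
  have hptend : Tendsto p atBot (𝓝 0) := by
    apply tendsto_order.2
    constructor
    · intro a ha
      filter_upwards [Iio_mem_atBot (min 0 L)] with x hxm
      exact lt_trans ha (hppos x (lt_of_lt_of_le hxm (min_le_right _ _)))
    · intro b hb
      set q₁ := min b t₀ with hq₁def
      have hq₁0 : 0 < q₁ := lt_min hb ht₀
      have hGq₁ : G q₁ ≤ 0 := by
        rcases eq_or_lt_of_le (min_le_right b t₀ : q₁ ≤ t₀) with h | h
        · show G (b ⊓ t₀) ≤ 0; rw [h, hG0]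
        · rw [← hG0]; exact (hGmono hq₁0 ht₀mem h).le
      filter_upwards [Iio_mem_atBot (G q₁)] with x hxm
      have hxL : x < L := lt_of_lt_of_le hxm (le_trans hGq₁ hL.le)
      exact lt_of_lt_of_le ((hplt x hxL q₁ hq₁0).mpr hxm) (min_le_left _ _)
  refine ⟨p, L, hL, hp0, hpderiv, hppos, ?_, hptend⟩
  intro x hx
  have hxL : x < L := lt_trans hx hL
  rw [← hp0]
  have h0L : (0:ℝ) < L := hL
  exact (hGmono.lt_iff_lt (hpmem x hxL) (hpmem 0 h0L)).mp (by rw [hGp x hxL, hGp 0 h0L]; exact hx)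


/-- the profile Cauchy problem has a unique solution `U_{θ,ε}` on `(−∞,0]`;
it satisfies `U < 0`, `U' > 0`, `U'' > 0` on `(−∞,0)`, the scaling relation
`U_{θ,ε}(x) = ε U_{θ,1}(x/ε)`, and `U'_{θ,1}(x) → 0` as `x → −∞`. -/
theorem profile_ode_existence_uniqueness
    (ε θ : ℝ) (hε : 0 < ε) (hθ : θ ∈ Ioo (0:ℝ) (π / 2)) :
    ∃ U : ℝ → ℝ, IsProfileSol ε θ U ∧
      (∀ x < (0:ℝ), U x < 0 ∧ 0 < deriv U x ∧ 0 < deriv (deriv U) x) ∧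
      (∀ V : ℝ → ℝ, IsProfileSol ε θ V → ∀ x ≤ (0:ℝ), V x = U x) ∧
      (∀ U₁ : ℝ → ℝ, IsProfileSol 1 θ U₁ →
        (∀ x ≤ (0:ℝ), U x = ε * U₁ (x / ε)) ∧
        Tendsto (deriv U₁) atBot (nhds 0)) := by
  set t₀ := Real.tan θ with ht₀def
  have ht₀ : 0 < t₀ := Real.tan_pos_of_pos_of_lt_pi_div_two hθ.1 hθ.2
  obtain ⟨p, L, hL, hp0, hpderiv, hppos, hpt₀, hptend⟩ := exists_p t₀ ht₀
  have hpcont : ContinuousOn p (Iio L) :=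
    fun x hx => ((hpderiv x hx).continuousAt).continuousWithinAt
  set S : ℝ → ℝ := fun x => ∫ t in (0:ℝ)..x, p t with hSdef
  have hSint : ∀ x < L, IntervalIntegrable p MeasureTheory.volume 0 x := by
    intro x hx
    apply (hpcont.mono ?_).intervalIntegrable
    intro t ht
    exact lt_of_le_of_lt ht.2 (max_lt hL hx)
  have hSderiv : ∀ x < L, HasDerivAt S (p x) x := by
    intro x hx
    exact integral_hasDerivAt_right (hSint x hx)
      (hpcont.stronglyMeasurableAtFilter isOpen_Iio x hx)
      (hpderiv x hx).continuousAt
  have hSd : ∀ x < L, deriv S x = p x := fun x hx => (hSderiv x hx).deriv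
  have hS2 : ∀ x < L, HasDerivAt (deriv S) (Fq (p x)) x := by
    intro x hx
    apply (hpderiv x hx).congr_of_eventuallyEq
    filter_upwards [Iio_mem_nhds hx] with y hy
    exact hSd y hy
  have hS2d : ∀ x < L, deriv (deriv S) x = Fq (p x) := fun x hx => (hS2 x hx).deriv
  -- the rescaled solution
  set U : ℝ → ℝ := fun x => ε * S (x / ε) with hUdef
  have hεL : 0 < ε * L := mul_pos hε hL
  have hdivlt : ∀ x : ℝ, x < ε * L → x / ε < L := fun x hx => (div_lt_iff₀' hε).mpr hx
  have hUderiv : ∀ x < ε * L, HasDerivAt U (p (x/ε)) x := by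
    intro x hx
    have h1 : HasDerivAt (fun y : ℝ => y / ε) (1/ε) x := by
      simpa using (hasDerivAt_id x).div_const ε
    have h2 := (hSderiv (x/ε) (hdivlt x hx)).comp x h1
    have h3 := h2.const_mul ε
    exact h3.congr_deriv (by field_simp)
  have hUd : ∀ x < ε * L, deriv U x = p (x/ε) := fun x hx => (hUderiv x hx).deriv
  have hU2 : ∀ x < ε * L, HasDerivAt (deriv U) ((1/ε) * Fq (p (x/ε))) x := by
    intro x hx
    have h1 : HasDerivAt (fun y : ℝ => y / ε) (1/ε) x := by
      simpa using (hasDerivAt_id x).div_const ε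
    have h2 := (hpderiv (x/ε) (hdivlt x hx)).comp x h1
    have h3 : HasDerivAt (fun y : ℝ => p (y/ε)) ((1/ε) * Fq (p (x/ε))) x := by
      exact h2.congr_deriv (by ring)
    apply h3.congr_of_eventuallyEq
    filter_upwards [Iio_mem_nhds hx] with y hy
    exact hUd y hy
  have hU2d : ∀ x < ε * L, deriv (deriv U) x = (1/ε) * Fq (p (x/ε)) :=
    fun x hx => (hU2 x hx).deriv
  have hle_lt : ∀ x : ℝ, x ≤ 0 → x < ε * L := fun x hx => lt_of_le_of_lt hx hεL
  have hU0 : U 0 = 0 := by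
    rw [hUdef]; simp [hSdef, zero_div]
  have hUd0 : deriv U 0 = t₀ := by
    rw [hUd 0 hεL, zero_div, hp0]
  have hUsol : IsProfileSol ε θ U := by
    refine ⟨fun x hx => ⟨(hUderiv x (hle_lt x hx)).differentiableAt,
      (hU2 x (hle_lt x hx)).differentiableAt⟩, hU0, hUd0, ?_⟩
    intro x hx
    rw [hU2d x (hle_lt x hx), hUd x (hle_lt x hx), Fq_def]
    ring
  -- sign properties
  have hsign : ∀ x < (0:ℝ), U x < 0 ∧ 0 < deriv U x ∧ 0 < deriv (deriv U) x := by
    intro x hx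
    have hxε : x / ε < 0 := div_neg_of_neg_of_pos hx hε
    have hxL : x < ε * L := lt_trans hx hεL
    refine ⟨?_, ?_, ?_⟩
    · have hpos : 0 < ∫ t in (x/ε)..(0:ℝ), p t := by
        apply intervalIntegral_pos_of_pos_on ((hSint (x/ε) (hdivlt x hxL)).symm)
        · intro t ht
          exact hppos t (lt_trans ht.2 hL)
        · exact hxε
      have : S (x/ε) < 0 := by
        rw [hSdef]
        simp only [intervalIntegral.integral_symm (x/ε) 0]
        linarith
      calc U x = ε * S (x/ε) := rfl
        _ < 0 := mul_neg_of_pos_of_neg hε this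
    · rw [hUd x hxL]
      exact hppos _ (hdivlt x hxL)
    · rw [hU2d x hxL]
      have := Fq_pos (hppos _ (hdivlt x hxL))
      positivity
  -- uniqueness
  have huniq : ∀ V : ℝ → ℝ, IsProfileSol ε θ V → ∀ x ≤ (0:ℝ), V x = U x := by
    intro V hV
    obtain ⟨hVdiff, hV0, hVd0, hVode⟩ := hV
    have h₁ : ∀ t ≤ (0:ℝ), HasDerivAt (deriv V) ((1/ε) * Fq (deriv V t)) t := by
      intro t ht
      have hd := ((hVdiff t ht).2).hasDerivAt
      rw [hVode t ht] at hd
      exact hd.congr_deriv (by rw [Fq_def]; ring)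
    have h₂ : ∀ t ≤ (0:ℝ), HasDerivAt (deriv U) ((1/ε) * Fq (deriv U t)) t := by
      intro t ht
      have := hU2 t (hle_lt t ht)
      rwa [← hUd t (hle_lt t ht)] at this
    have hw := ode_unique (1/ε) (deriv V) (deriv U) h₁ h₂ (by rw [hVd0, hUd0])
    intro x hx
    rcases eq_or_lt_of_le hx with rfl | hx'
    · rw [hV0, hU0]
    · have key := constant_of_has_deriv_right_zero (f := fun y => V y - U y) (a := x) (b := 0)
        (fun y hy => (((hVdiff y hy.2).1.continuousAt).sub
          ((hUderiv y (hle_lt y hy.2)).differentiableAt.continuousAt)).continuousWithinAt)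
        ?_ 0 ⟨hx, le_refl 0⟩
      · have : V 0 - U 0 = V x - U x := key
        rw [hV0, hU0] at this
        linarith
      · intro y hy
        have hd := ((hVdiff y hy.2.le).1.hasDerivAt).sub (hUderiv y (hle_lt y hy.2.le))
        have hval : deriv V y - p (y/ε) = 0 := by
          rw [hw y hy.2.le, hUd y (hle_lt y hy.2.le)]; ring
        rw [hval] at hd
        exact hd.hasDerivWithinAt
  refine ⟨U, hUsol, hsign, huniq, ?_⟩
  -- scaling
  intro U₁ hU₁
  obtain ⟨hWdiff, hW0, hWd0, hWode⟩ := hU₁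
  have h₁ : ∀ t ≤ (0:ℝ), HasDerivAt (deriv U₁) (1 * Fq (deriv U₁ t)) t := by
    intro t ht
    have hd := ((hWdiff t ht).2).hasDerivAt
    rw [hWode t ht] at hd
    exact hd.congr_deriv (by rw [Fq_def]; ring)
  have h₂ : ∀ t ≤ (0:ℝ), HasDerivAt (deriv S) (1 * Fq (deriv S t)) t := by
    intro t ht
    have htL : t < L := lt_of_le_of_lt ht hL
    have := hS2 t htL
    rw [← hSd t htL] at this
    simpa using this
  have hw := ode_unique 1 (deriv U₁) (deriv S) h₁ h₂
    (by rw [hWd0, hSd 0 hL, hp0])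
  have hUS : ∀ x ≤ (0:ℝ), U₁ x = S x := by
    intro x hx
    rcases eq_or_lt_of_le hx with rfl | hx'
    · rw [hW0, hSdef]; simp
    · have key := constant_of_has_deriv_right_zero (f := fun y => U₁ y - S y) (a := x) (b := 0)
        (fun y hy => (((hWdiff y hy.2).1.continuousAt).sub
          ((hSderiv y (lt_of_le_of_lt hy.2 hL)).differentiableAt.continuousAt)).continuousWithinAt)
        ?_ 0 ⟨hx, le_refl 0⟩
      · have : U₁ 0 - S 0 = U₁ x - S x := key
        rw [hW0] at this
        have hS0 : S 0 = 0 := by rw [hSdef]; simp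
        rw [hS0] at this
        linarith
      · intro y hy
        have hd := ((hWdiff y hy.2.le).1.hasDerivAt).sub (hSderiv y (lt_of_le_of_lt hy.2.le hL))
        have hval : deriv U₁ y - p y = 0 := by
          rw [hw y hy.2.le, hSd y (lt_of_le_of_lt hy.2.le hL)]; ring
        rw [hval] at hd
        exact hd.hasDerivWithinAt
  constructor
  · intro x hx
    have : U₁ (x/ε) = S (x/ε) := hUS (x/ε) (div_nonpos_of_nonpos_of_nonneg hx hε.le)
    rw [hUdef, this]
  · have heq : deriv U₁ =ᶠ[atBot] p := by
      filter_upwards [Iio_mem_atBot 0] with y hy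
      have h1 : U₁ =ᶠ[𝓝 y] S := by
        filter_upwards [Iio_mem_nhds hy] with z hz
        exact hUS z hz.le
      rw [h1.deriv_eq, hSd y (lt_trans hy hL)]
    exact hptend.congr' heq.symm
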